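/- Assume κ'(1) = 1 and Assumption A. Then for every t ∈ [-1,1], lim_{L→∞} L^{1/(ρ−1)}·(1 − κ_L(t)) = 0 if t ∈ I(κ), and lim_{L→∞} L^{1/(ρ−1)}·(1 − κ_L(t)) = (c(ρ−1))^{−1/(ρ−1)} if t ∉ I(κ). -/

import Mathlib

open Filter Topology Set Asymptotics

-- helper lemmas pasted

lemma mygeom_le {s : ℝ} (h1 : -1 ≤ s) (h2 : s ≤ 1) (q : ℕ) :
    1 - s ^ q ≤ q * (1 - s) := by
  have habs : |s| ≤ 1 := abs_le.2 ⟨h1, h2⟩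
  have hgeom : 1 - s ^ q = (∑ i ∈ Finset.range q, s ^ i) * (1 - s) := by
    have := geom_sum_mul s q
    ring_nf
    ring_nf at this
    linarith
  rw [hgeom]
  have hsum : (∑ i ∈ Finset.range q, s ^ i) ≤ q := by
    calc (∑ i ∈ Finset.range q, s ^ i) ≤ ∑ i ∈ Finset.range q, (1:ℝ) := by
          refine Finset.sum_le_sum fun i _ => ?_
          calc s ^ i ≤ |s ^ i| := le_abs_self _
            _ = |s| ^ i := abs_pow s i
            _ ≤ 1 := pow_le_one₀ (abs_nonneg s) habs
      _ = q := by simp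
  have h1s : 0 ≤ 1 - s := by linarith
  nlinarith [Finset.sum_le_card_nsmul (Finset.range q) (fun i => s ^ i) 1 (fun i _ => by
    calc s ^ i ≤ |s ^ i| := le_abs_self _
      _ = |s| ^ i := abs_pow s i
      _ ≤ 1 := pow_le_one₀ (abs_nonneg s) habs)]

lemma mygeom_lt {s : ℝ} (h1 : -1 ≤ s) (h2 : s < 1) {q : ℕ} (hq : 2 ≤ q) :
    1 - s ^ q < q * (1 - s) := by
  have habs : |s| ≤ 1 := abs_le.2 ⟨h1, h2.le⟩
  have hgeom : 1 - s ^ q = (∑ i ∈ Finset.range q, s ^ i) * (1 - s) := by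
    have := geom_sum_mul s q
    ring_nf; ring_nf at this; linarith
  rw [hgeom]
  have hsum : (∑ i ∈ Finset.range q, s ^ i) < q := by
    have : (∑ i ∈ Finset.range q, s ^ i) < ∑ i ∈ Finset.range q, (1:ℝ) := by
      refine Finset.sum_lt_sum (fun i _ => ?_) ⟨1, Finset.mem_range.2 (by omega), by simpa using h2⟩
      calc s ^ i ≤ |s ^ i| := le_abs_self _
        _ = |s| ^ i := abs_pow s i
        _ ≤ 1 := pow_le_one₀ (abs_nonneg s) habs
    simpa using this
  have h1s : 0 < 1 - s := by linarith
  nlinarith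

lemma kappa_gt (a : ℕ → ℝ) (κ : ℝ → ℝ)
    (ha : ∀ q, 0 ≤ a q) (hsum : HasSum a 1)
    (hder : Summable fun q : ℕ => (q : ℝ) * a q)
    (hk1 : (∑' q : ℕ, (q : ℝ) * a q) = 1)
    (hκ : ∀ t ∈ Icc (-1 : ℝ) 1, HasSum (fun q => a q * t ^ q) (κ t))
    {q₀ : ℕ} (hq₀ : 2 ≤ q₀) (ha₀ : a q₀ ≠ 0)
    {s : ℝ} (h1 : -1 ≤ s) (h2 : s < 1) : s < κ s := by
  have hd1 : HasSum (fun q : ℕ => (q : ℝ) * a q) 1 := hk1 ▸ hder.hasSum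
  have hf : HasSum (fun q : ℕ => s * a q + (s - 1) * ((q : ℝ) * a q - a q)) s := by
    have := (hsum.mul_left s).add (((hd1.sub hsum).mul_left (s - 1)))
    simpa using this
  have hg : HasSum (fun q : ℕ => a q * s ^ q) (κ s) := hκ s ⟨h1, h2.le⟩
  refine hasSum_lt (f := fun q : ℕ => s * a q + (s - 1) * ((q : ℝ) * a q - a q))
    (i := q₀) ?_ ?_ hf hg
  · intro q
    have h := mygeom_le h1 h2.le q
    have haq := ha q
    show s * a q + (s - 1) * ((q : ℝ) * a q - a q) ≤ a q * s ^ q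
    nlinarith [h]
  · have h := mygeom_lt h1 h2 hq₀
    have haq := (ha q₀).lt_of_ne (Ne.symm ha₀)
    show s * a q₀ + (s - 1) * ((q₀ : ℝ) * a q₀ - a q₀) < a q₀ * s ^ q₀
    nlinarith [h]

lemma kappa_lt_one (a : ℕ → ℝ) (κ : ℝ → ℝ)
    (ha : ∀ q, 0 ≤ a q) (hsum : HasSum a 1)
    (hκ : ∀ t ∈ Icc (-1 : ℝ) 1, HasSum (fun q => a q * t ^ q) (κ t))
    {q₀ : ℕ} (hq₀ : 2 ≤ q₀) (ha₀ : a q₀ ≠ 0)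
    {s : ℝ} (h1 : -1 < s) (h2 : s < 1) : κ s < 1 := by
  have hg : HasSum (fun q : ℕ => a q * s ^ q) (κ s) := hκ s ⟨h1.le, h2.le⟩
  have habs : |s| < 1 := abs_lt.2 ⟨h1, h2⟩
  refine hasSum_lt (g := a) (i := q₀) ?_ ?_ hg hsum
  · intro q
    have : s ^ q ≤ 1 := by
      calc s ^ q ≤ |s ^ q| := le_abs_self _
        _ = |s| ^ q := abs_pow s q
        _ ≤ 1 := pow_le_one₀ (abs_nonneg s) habs.le
    show a q * s ^ q ≤ a q
    nlinarith [ha q]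
  · have : s ^ q₀ < 1 := by
      calc s ^ q₀ ≤ |s ^ q₀| := le_abs_self _
        _ = |s| ^ q₀ := abs_pow s q₀
        _ < 1 := pow_lt_one₀ (abs_nonneg s) habs (by omega)
    show a q₀ * s ^ q₀ < a q₀
    nlinarith [(ha q₀).lt_of_ne (Ne.symm ha₀)]

lemma kappa_contOn (a : ℕ → ℝ) (κ : ℝ → ℝ) (hsum : HasSum a 1)
    (ha : ∀ q, 0 ≤ a q)
    (hκ : ∀ t ∈ Icc (-1 : ℝ) 1, HasSum (fun q => a q * t ^ q) (κ t)) :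
    ContinuousOn κ (Icc (-1 : ℝ) 1) := by
  have h : ContinuousOn (fun t : ℝ => ∑' q, a q * t ^ q) (Icc (-1 : ℝ) 1) := by
    refine continuousOn_tsum (u := a)
      (fun i => (continuous_const.mul (continuous_pow i)).continuousOn)
      hsum.summable (fun n x hx => ?_)
    have habs : |x| ≤ 1 := abs_le.2 ⟨hx.1, hx.2⟩
    have : |a n * x ^ n| = a n * |x| ^ n := by
      rw [abs_mul, abs_pow, abs_of_nonneg (ha n)]
    rw [Real.norm_eq_abs, this]
    nlinarith [pow_le_one₀ (abs_nonneg x) habs (n := n), ha n,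
      pow_nonneg (abs_nonneg x) n]
  exact h.congr fun x hx => ((hκ x hx).tsum_eq).symm

theorem sparse_limit
    (a : ℕ → ℝ) (κ : ℝ → ℝ) (c ρ : ℝ)
    (ha : ∀ q, 0 ≤ a q)
    (hsum : HasSum a 1)
    (hinf : {q | a q ≠ 0}.Infinite)
    (hder : Summable fun q : ℕ => (q : ℝ) * a q)
    (hκ : ∀ t ∈ Icc (-1 : ℝ) 1, HasSum (fun q => a q * t ^ q) (κ t))
    (hmap : MapsTo κ (Icc (-1 : ℝ) 1) (Icc (-1 : ℝ) 1))
    (hk1 : (∑' q : ℕ, (q : ℝ) * a q) = 1)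
    (hc : c ≠ 0) (hρ : 1 < ρ)
    (hA : (fun t : ℝ => (1 - κ t) - ((∑' q : ℕ, (q : ℝ) * a q) * (1 - t) - c * (1 - t) ^ ρ))
        =o[𝓝[<] (1 : ℝ)] fun t : ℝ => (1 - t) ^ ρ) :
    ∀ t ∈ Icc (-1 : ℝ) 1,
      (κ t = 1 →
        Tendsto (fun L : ℕ => (L : ℝ) ^ ((1 : ℝ) / (ρ - 1)) * (1 - κ^[L] t)) atTop (𝓝 0)) ∧
      (κ t ≠ 1 →
        Tendsto (fun L : ℕ => (L : ℝ) ^ ((1 : ℝ) / (ρ - 1)) * (1 - κ^[L] t)) atTop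
          (𝓝 ((c * (ρ - 1)) ^ (-(1 : ℝ) / (ρ - 1))))) := by
  rw [hk1] at hA
  obtain ⟨q₀, ha₀, hq₀⟩ := hinf.exists_gt 1
  have hq₀2 : 2 ≤ q₀ := hq₀
  have hκ1 : κ 1 = 1 := by
    have h := hκ 1 (by norm_num)
    simp only [one_pow, mul_one] at h
    exact (hsum.unique h).symm
  have hcont := kappa_contOn a κ hsum ha hκ
  intro t ht
  constructor
  · -- case κ t = 1
    intro h1
    have hiter1 : ∀ L : ℕ, κ^[L] (1 : ℝ) = 1 := by
      intro L
      induction L with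
      | zero => simp
      | succ n ih => rw [Function.iterate_succ_apply', ih, hκ1]
    have hiter : ∀ L : ℕ, 1 ≤ L → κ^[L] t = 1 := by
      intro L hL
      obtain ⟨n, rfl⟩ := Nat.exists_eq_add_of_le hL
      rw [add_comm, Function.iterate_add_apply, Function.iterate_one, h1, hiter1]
    have : (fun L : ℕ => (L : ℝ) ^ ((1 : ℝ) / (ρ - 1)) * (1 - κ^[L] t)) =ᶠ[atTop]
        fun _ => (0 : ℝ) := by
      filter_upwards [eventually_ge_atTop 1] with L hL
      rw [hiter L hL]; ring
    rw [tendsto_congr' this]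
    exact tendsto_const_nhds
  · -- case κ t ≠ 1
    intro hne
    have hρ1 : (0 : ℝ) < ρ - 1 := by linarith
    set T : ℕ → ℝ := fun L => κ^[L] t with hTdef
    have hT0 : T 0 = t := rfl
    have hTsucc : ∀ L, T (L + 1) = κ (T L) := fun L => Function.iterate_succ_apply' κ L t
    have hmem : ∀ L, T L ∈ Icc (-1 : ℝ) 1 := by
      intro L
      induction L with
      | zero => exact ht
      | succ n ih => rw [hTsucc]; exact hmap ih
    have ht1 : t < 1 := by
      rcases lt_or_eq_of_le ht.2 with h | h
      · exact h
      · exact absurd (h ▸ hκ1 : κ t = 1) hne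
    have hgt : ∀ s, -1 ≤ s → s < 1 → s < κ s := fun s h1 h2 =>
      kappa_gt a κ ha hsum hder hk1 hκ hq₀2 ha₀ h1 h2
    -- T L < 1 and (for L ≥ 1) T L > -1
    have hkey : ∀ L, T (L + 1) < 1 ∧ -1 < T (L + 1) := by
      intro L
      induction L with
      | zero =>
        constructor
        · rw [hTsucc, hT0]
          exact lt_of_le_of_ne (hmap ht).2 hne
        · rw [hTsucc, hT0]
          exact lt_of_le_of_lt ht.1 (hgt t ht.1 ht1)
      | succ n ih =>
        obtain ⟨ihl, ihg⟩ := ih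
        constructor
        · rw [hTsucc]
          exact kappa_lt_one a κ ha hsum hκ hq₀2 ha₀ ihg ihl
        · rw [hTsucc]
          exact lt_trans ihg (hgt _ (hmem (n + 1)).1 ihl)
    have hlt : ∀ L, T L < 1 := by
      intro L
      cases L with
      | zero => exact ht1
      | succ n => exact (hkey n).1
    have hmono : StrictMono T := by
      apply strictMono_nat_of_lt_succ
      intro n
      rw [hTsucc]
      exact hgt _ (hmem n).1 (hlt n)
    -- limit is 1
    have hbdd : BddAbove (range T) := ⟨1, fun x ⟨L, hL⟩ => hL ▸ (hmem L).2⟩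
    set ℓ : ℝ := ⨆ L, T L with hℓdef
    have htend : Tendsto T atTop (𝓝 ℓ) := tendsto_atTop_ciSup hmono.monotone hbdd
    have hℓmem : ℓ ∈ Icc (-1 : ℝ) 1 := by
      constructor
      · exact le_trans (hmem 0).1 (le_ciSup hbdd 0)
      · exact ciSup_le fun L => (hmem L).2
    have hℓ1 : ℓ = 1 := by
      by_contra hℓne
      have hℓlt : ℓ < 1 := lt_of_le_of_ne hℓmem.2 hℓne
      have h1 : Tendsto (fun L => T (L + 1)) atTop (𝓝 ℓ) :=
        htend.comp (tendsto_add_atTop_nat 1)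
      have h2 : Tendsto (fun L => κ (T L)) atTop (𝓝 (κ ℓ)) := by
        have := (hcont ℓ hℓmem).tendsto
        exact this.comp (tendsto_nhdsWithin_of_tendsto_nhds_of_eventually_within T htend
          (Eventually.of_forall hmem))
      have heq : (fun L => T (L + 1)) = fun L => κ (T L) := funext hTsucc
      rw [heq] at h1
      have : κ ℓ = ℓ := tendsto_nhds_unique h2 h1
      exact absurd this.symm (ne_of_lt (hgt ℓ hℓmem.1 hℓlt))
    rw [hℓ1] at htend
    -- epsilon sequence
    set ε : ℕ → ℝ := fun L => 1 - T L with hεdef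
    have hεpos : ∀ L, 0 < ε L := fun L => by simp only [hεdef]; linarith [hlt L]
    have hεtend : Tendsto ε atTop (𝓝 0) := by
      have := (tendsto_const_nhds (x := (1:ℝ)) (f := atTop)).sub htend
      simpa using this
    -- c > 0
    have hcpos : 0 < c := by
      have hev := hA.def (show (0:ℝ) < |c| / 2 by positivity)
      have hev2 : Ioo (-1 : ℝ) 1 ∈ 𝓝[<] (1 : ℝ) :=
        Ioo_mem_nhdsLT_of_mem ⟨by norm_num, le_refl 1⟩
      obtain ⟨s, hsb, hs1, hs2⟩ := (hev.and (eventually_of_mem hev2 fun x hx => hx)).exists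
      have hP : (0:ℝ) < (1 - s) ^ ρ := Real.rpow_pos_of_pos (by linarith) ρ
      have hks : s < κ s := hgt s hs1.le hs2
      rw [Real.norm_eq_abs, Real.norm_eq_abs, abs_of_pos hP] at hsb
      rw [abs_le] at hsb
      rcases abs_cases c with ⟨hac, _⟩ | ⟨hac, hcneg⟩
      · rcases lt_or_eq_of_le (abs_nonneg c) with h | h
        · rwa [← hac, abs_pos] at h ⊢
        · exact absurd (by rw [← abs_eq_zero]; exact h.symm) hc
      · exfalso
        nlinarith [hsb.1, hsb.2]
    -- little-o along the sequence
    have htendlt : Tendsto T atTop (𝓝[<] (1 : ℝ)) :=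
      tendsto_nhdsWithin_of_tendsto_nhds_of_eventually_within T htend
        (Eventually.of_forall fun L => hlt L)
    have hcomp := hA.comp_tendsto htendlt
    have hr : Tendsto (fun L => ((1 - κ (T L)) - (1 * (1 - T L) - c * (1 - T L) ^ ρ))
        / ε L ^ ρ) atTop (𝓝 0) := hcomp.tendsto_div_nhds_zero
    set r : ℕ → ℝ := fun L =>
      ((1 - κ (T L)) - (1 * (1 - T L) - c * (1 - T L) ^ ρ)) / ε L ^ ρ with hrdef
    have hεrpos : ∀ L, (0:ℝ) < ε L ^ ρ := fun L => Real.rpow_pos_of_pos (hεpos L) ρ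
    have hrec : ∀ L, ε (L + 1) = ε L - (c - r L) * ε L ^ ρ := by
      intro L
      have hne' : ε L ^ ρ ≠ 0 := (hεrpos L).ne'
      have : r L * ε L ^ ρ = (1 - κ (T L)) - (1 * (1 - T L) - c * (1 - T L) ^ ρ) := by
        rw [hrdef]; field_simp
      have hε1 : ε (L + 1) = 1 - κ (T L) := by rw [hεdef]; simp [hTsucc]
      have hεL : (1 : ℝ) - T L = ε L := rfl
      rw [hε1]
      rw [hεL] at this
      linarith [this]
    -- x sequence
    set x : ℕ → ℝ := fun L => (c - r L) * ε L ^ (ρ - 1) with hxdef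
    have hεFrac : ∀ L, ε L ^ ρ = ε L * ε L ^ (ρ - 1) := by
      intro L
      nth_rewrite 2 [← Real.rpow_one (ε L)]
      rw [← Real.rpow_add (hεpos L)]
      ring_nf
    have hx1 : ∀ L, ε (L + 1) = ε L * (1 - x L) := by
      intro L
      rw [hrec L, hxdef, hεFrac L]; ring
    have h1xpos : ∀ L, 0 < 1 - x L := by
      intro L
      have := hεpos (L + 1)
      rw [hx1 L] at this
      nlinarith [hεpos L]
    have hεp1 : Tendsto (fun L => ε L ^ (ρ - 1)) atTop (𝓝 0) := by
      have h0 : ((0:ℝ) ^ (ρ - 1) : ℝ) = 0 := Real.zero_rpow (by linarith)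
      have := hεtend.rpow_const (p := ρ - 1) (Or.inr (by linarith))
      rwa [h0] at this
    have hcr : Tendsto (fun L => c - r L) atTop (𝓝 c) := by
      have := (tendsto_const_nhds (x := c) (f := atTop)).sub hr
      simpa using this
    have hxtend : Tendsto x atTop (𝓝 0) := by
      have := hcr.mul hεp1
      simpa using this
    have hxne : ∀ᶠ L in atTop, x L ≠ 0 := by
      filter_upwards [hcr.eventually_ne hc] with L hL
      exact mul_ne_zero hL (Real.rpow_pos_of_pos (hεpos L) _).ne'
    -- slope of y ↦ (1-y)^(1-ρ) at 0
    have hderiv : HasDerivAt (fun y : ℝ => (1 - y) ^ (1 - ρ)) (ρ - 1) 0 := by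
      have h1 : HasDerivAt (fun y : ℝ => y ^ (1 - ρ)) ((1 - ρ) * (1:ℝ) ^ (1 - ρ - 1)) 1 :=
        Real.hasDerivAt_rpow_const (Or.inl one_ne_zero)
      have h2 : HasDerivAt (fun y : ℝ => 1 - y) (-1) 0 := (hasDerivAt_id 0).const_sub 1
      have h1' : HasDerivAt (fun y : ℝ => y ^ (1 - ρ)) ((1 - ρ) * (1:ℝ) ^ (1 - ρ - 1))
          ((fun y : ℝ => 1 - y) 0) := by simpa using h1
      have h3 := h1'.comp 0 h2
      have h4 : HasDerivAt (fun y : ℝ => (1 - y) ^ (1 - ρ))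
          ((1 - ρ) * (1:ℝ) ^ (1 - ρ - 1) * (-1)) 0 := h3
      have : (1 - ρ) * (1:ℝ) ^ (1 - ρ - 1) * (-1) = ρ - 1 := by
        rw [Real.one_rpow]; ring
      rwa [this] at h4
    have hslope0 : Tendsto (fun y : ℝ => ((1 - y) ^ (1 - ρ) - 1) / y) (𝓝[≠] (0:ℝ))
        (𝓝 (ρ - 1)) := by
      have := hasDerivAt_iff_tendsto_slope.mp hderiv
      refine this.congr fun y => ?_
      rw [slope_def_field]
      norm_num
    have hxlt : Tendsto x atTop (𝓝[≠] (0:ℝ)) :=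
      tendsto_nhdsWithin_of_tendsto_nhds_of_eventually_within x hxtend hxne
    have hslope : Tendsto (fun L => ((1 - x L) ^ (1 - ρ) - 1) / x L) atTop (𝓝 (ρ - 1)) :=
      hslope0.comp hxlt
    -- u sequence
    set u : ℕ → ℝ := fun L => ε L ^ (1 - ρ) with hudef
    have hupos : ∀ L, 0 < u L := fun L => Real.rpow_pos_of_pos (hεpos L) _
    have hdiffeq : ∀ L, x L ≠ 0 →
        u (L + 1) - u L = ((1 - x L) ^ (1 - ρ) - 1) / x L * (c - r L) := by
      intro L hxL
      have hmul : u (L + 1) = u L * (1 - x L) ^ (1 - ρ) := by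
        rw [hudef]
        simp only
        rw [hx1 L, Real.mul_rpow (hεpos L).le (h1xpos L).le]
      have hxu : x L * (ε L) ^ (1 - ρ) = c - r L := by
        rw [hxdef]
        simp only
        rw [mul_assoc, ← Real.rpow_add (hεpos L)]
        norm_num
      have huL : u L = ε L ^ (1 - ρ) := rfl
      rw [hmul]
      field_simp
      rw [← hxu, huL]
      ring
    have hdiff : Tendsto (fun L => u (L + 1) - u L) atTop (𝓝 (c * (ρ - 1))) := by
      have hlim := hslope.mul hcr
      have : (ρ - 1) * c = c * (ρ - 1) := by ring
      rw [this] at hlim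
      refine Tendsto.congr' ?_ hlim
      filter_upwards [hxne] with L hL
      exact (hdiffeq L hL).symm
    -- Cesàro / Stolz
    have hcesaro := hdiff.cesaro
    have hsum_tel : ∀ n : ℕ, ∑ i ∈ Finset.range n, (u (i + 1) - u i) = u n - u 0 :=
      fun n => Finset.sum_range_sub u n
    have hinv0 : Tendsto (fun n : ℕ => (n : ℝ)⁻¹ * u 0) atTop (𝓝 0) := by
      have := (tendsto_inv_atTop_nhds_zero_nat (𝕜 := ℝ)).mul_const (u 0)
      simpa using this
    have huq : Tendsto (fun n : ℕ => (n : ℝ)⁻¹ * u n) atTop (𝓝 (c * (ρ - 1))) := by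
      have h1 : Tendsto (fun n : ℕ => (n : ℝ)⁻¹ * (u n - u 0) + (n : ℝ)⁻¹ * u 0) atTop
          (𝓝 (c * (ρ - 1) + 0)) := by
        refine Tendsto.add ?_ hinv0
        refine Tendsto.congr (fun n => by rw [hsum_tel n]) hcesaro
      rw [add_zero] at h1
      refine Tendsto.congr (fun n => by ring) h1
    have hdpos : 0 < c * (ρ - 1) := mul_pos hcpos hρ1
    have hfin := huq.rpow_const (p := -(1:ℝ) / (ρ - 1)) (Or.inl hdpos.ne')
    refine Tendsto.congr' ?_ hfin
    filter_upwards [eventually_ge_atTop 1] with L hL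
    have hL0 : (0:ℝ) < (L : ℝ) := by exact_mod_cast Nat.pos_of_ne_zero (by omega)
    have hε : (1 : ℝ) - κ^[L] t = ε L := rfl
    rw [hε]
    rw [Real.mul_rpow (inv_nonneg.mpr hL0.le) (hupos L).le,
        Real.inv_rpow hL0.le, ← Real.rpow_neg hL0.le]
    have h1 : -(-(1:ℝ) / (ρ - 1)) = 1 / (ρ - 1) := by ring
    rw [h1]
    have h2 : (u L) ^ (-(1:ℝ) / (ρ - 1)) = ε L := by
      rw [hudef]
      simp only
      rw [← Real.rpow_mul (hεpos L).le]
      have h3 : (1 - ρ) * (-(1:ℝ) / (ρ - 1)) = 1 := by field_simp; ring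
      rw [h3, Real.rpow_one]
    rw [h2]
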